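/- arXiv:2310.15843 — 2 statements merged into one kernel-verified Lean document; each statement's English description precedes it below -/
import Mathlib

section
/- Let Ω = {x ∈ R^d : r−w ≤ |x| ≤ r} be a spherical shell with 0 < w ≤ r, and let H be any affine hyperplane of dimension d−1 in R^d with nonempty intersection with Ω. Then Ω ∩ H is, within H ≅ R^{d−1}, either a (d−1)-dimensional spherical shell of outer radius r_* and thickness w_*, a ball (viewed as a shell with r_* = w_*), or a single point, and in all cases r_* · w_* ≤ 2rw. -/
open MeasureTheory Metric

noncomputable def simplexVol (d : ℕ) (A : Fin (d+1) → EuclideanSpace ℝ (Fin d)) : ℝ :=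
  |Matrix.det (Matrix.of fun i j : Fin d => (A i.succ - A 0) j)| / (Nat.factorial d)

def IsReciprocal (d : ℕ) (A B : Fin (d+1) → EuclideanSpace ℝ (Fin d)) : Prop :=
  ∀ e : (Fin (d+1) ⊕ Fin (d+1)) ≃ (Fin (d+1) ⊕ Fin (d+1)),
    simplexVol d (Sum.elim A B ∘ e ∘ Sum.inl) * simplexVol d (Sum.elim A B ∘ e ∘ Sum.inr)
      ≤ simplexVol d A * simplexVol d B

/-- The standard surface measure on the unit sphere `S^{d-1}` in `ℝ^d`, realized as the
`(d-1)`-dimensional Hausdorff measure restricted to the sphere. -/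
noncomputable def sphereMeasure (d : ℕ) : Measure (EuclideanSpace ℝ (Fin d)) :=
  (MeasureTheory.Measure.hausdorffMeasure ((d : ℝ) - 1)).restrict
    (sphere (0 : EuclideanSpace ℝ (Fin d)) 1)

/-- The adjoint Radon transform. -/
noncomputable def adjRadon (d : ℕ) (G : ℝ × EuclideanSpace ℝ (Fin d) → ℝ)
    (x : EuclideanSpace ℝ (Fin d)) : ℝ :=
  ∫ ω, G ((inner ℝ x ω : ℝ), ω) ∂(sphereMeasure d)

/-- The product measure on `ℝ × S^{d-1}`. -/
noncomputable def radonMeasure (d : ℕ) : Measure (ℝ × EuclideanSpace ℝ (Fin d)) :=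
  (volume : Measure ℝ).prod (sphereMeasure d)

lemma shell_aux (r w h n t : ℝ) (hw : 0 < w) (hwr : w ≤ r) (h0 : 0 ≤ h) (hhr : h ≤ r)
    (hn : 0 ≤ n) (ht : 0 ≤ t) (hp : n ^ 2 = t ^ 2 + h ^ 2) :
    (r - w ≤ n ∧ n ≤ r) ↔
      (Real.sqrt ((r - w) ^ 2 - h ^ 2) ≤ t ∧ t ≤ Real.sqrt (r ^ 2 - h ^ 2)) := by
  have hrw0 : 0 ≤ r - w := by linarith
  have hri2 : (r - w) ^ 2 - h ^ 2 ≤ Real.sqrt ((r - w) ^ 2 - h ^ 2) ^ 2 := by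
    rcases le_or_gt ((r - w) ^ 2 - h ^ 2) 0 with hle | hlt
    · nlinarith [Real.sqrt_nonneg ((r - w) ^ 2 - h ^ 2)]
    · rw [Real.sq_sqrt hlt.le]
  have hrs2 : Real.sqrt (r ^ 2 - h ^ 2) ^ 2 = r ^ 2 - h ^ 2 := Real.sq_sqrt (by nlinarith)
  constructor
  · rintro ⟨h1, h2⟩
    constructor
    · rw [Real.sqrt_le_iff]
      exact ⟨ht, by nlinarith⟩
    · rw [← Real.sqrt_sq ht]
      exact Real.sqrt_le_sqrt (by nlinarith)
  · rintro ⟨h1, h2⟩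
    have hs0 : 0 ≤ Real.sqrt ((r - w) ^ 2 - h ^ 2) := Real.sqrt_nonneg _
    have h2' : t ^ 2 ≤ r ^ 2 - h ^ 2 := by nlinarith [Real.sqrt_nonneg (r ^ 2 - h ^ 2)]
    constructor
    · nlinarith
    · nlinarith

/-- The intersection of a spherical shell with a hyperplane is a lower-dimensional
spherical shell (a ball counting as a shell with \( w_* = r_* \), a point as \( r_* = w_* = 0 \)),
and its outer radius and thickness satisfy \( r_* w_* \le 2 r w \). -/
theorem stmt4 (d : ℕ) (r w : ℝ) (hw : 0 < w) (hwr : w ≤ r)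
    (H : AffineSubspace ℝ (EuclideanSpace ℝ (Fin d)))
    (hH : Module.finrank ℝ H.direction = d - 1)
    (hne : ({x : EuclideanSpace ℝ (Fin d) | r - w ≤ ‖x‖ ∧ ‖x‖ ≤ r}
        ∩ (H : Set (EuclideanSpace ℝ (Fin d)))).Nonempty) :
    ∃ c ∈ (H : Set (EuclideanSpace ℝ (Fin d))), ∃ rs ws : ℝ, 0 ≤ ws ∧ ws ≤ rs ∧
      {x : EuclideanSpace ℝ (Fin d) | r - w ≤ ‖x‖ ∧ ‖x‖ ≤ r}
          ∩ (H : Set (EuclideanSpace ℝ (Fin d)))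
        = {y ∈ (H : Set (EuclideanSpace ℝ (Fin d))) | rs - ws ≤ dist y c ∧ dist y c ≤ rs} ∧
      rs * ws ≤ 2 * r * w := by
  obtain ⟨x0, hx0Ω, hx0H⟩ := hne
  haveI : Nonempty H := ⟨⟨x0, hx0H⟩⟩
  set c : EuclideanSpace ℝ (Fin d) :=
    (EuclideanGeometry.orthogonalProjection H (0 : EuclideanSpace ℝ (Fin d)) : EuclideanSpace ℝ (Fin d)) with hc
  have hcH : c ∈ (H : Set (EuclideanSpace ℝ (Fin d))) :=
    (EuclideanGeometry.orthogonalProjection H 0).2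
  set h : ℝ := dist (0 : EuclideanSpace ℝ (Fin d)) c with hh
  have hpyth : ∀ y ∈ (H : Set (EuclideanSpace ℝ (Fin d))),
      ‖y‖ ^ 2 = dist y c ^ 2 + h ^ 2 := by
    intro y hy
    have := EuclideanGeometry.dist_sq_eq_dist_orthogonalProjection_sq_add_dist_orthogonalProjection_sq
      (s := H) (0 : EuclideanSpace ℝ (Fin d)) hy
    rw [← hc] at this
    have hnorm : dist y (0 : EuclideanSpace ℝ (Fin d)) = ‖y‖ := by simp
    rw [hnorm, ← hh] at this
    nlinarith [this]
  have h0 : 0 ≤ h := dist_nonneg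
  clear_value c h
  clear hc hh
  have hr0 : 0 < r := lt_of_lt_of_le hw hwr
  have hrw0 : 0 ≤ r - w := by linarith
  have hhr : h ≤ r := by
    have := hpyth x0 hx0H
    nlinarith [hx0Ω.2, norm_nonneg x0, dist_nonneg (x := x0) (y := c)]
  set rs : ℝ := Real.sqrt (r ^ 2 - h ^ 2) with hrs
  set ri : ℝ := Real.sqrt ((r - w) ^ 2 - h ^ 2) with hri
  have hrs2 : rs ^ 2 = r ^ 2 - h ^ 2 := Real.sq_sqrt (by nlinarith)
  have hrs0 : 0 ≤ rs := Real.sqrt_nonneg _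
  have hri0 : 0 ≤ ri := Real.sqrt_nonneg _
  have hri_le : ri ≤ rs := Real.sqrt_le_sqrt (by nlinarith)
  have hri2 : (r - w) ^ 2 - h ^ 2 ≤ ri ^ 2 := by
    rcases le_or_gt ((r - w) ^ 2 - h ^ 2) 0 with hle | hlt
    · nlinarith
    · rw [hri, Real.sq_sqrt hlt.le]
  refine ⟨c, hcH, rs, rs - ri, by linarith, by linarith, ?_, ?_⟩
  · ext y
    simp only [Set.mem_inter_iff, Set.mem_setOf_eq, sub_sub_cancel]
    constructor
    · rintro ⟨hmem, hyH⟩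
      have key := (shell_aux r w h ‖y‖ (dist y c) hw hwr h0 hhr (norm_nonneg y) dist_nonneg
        (hpyth y hyH)).mp hmem
      exact ⟨hyH, by rw [hri]; exact key.1, by rw [hrs]; exact key.2⟩
    · rintro ⟨hyH, h1, h2⟩
      refine ⟨(shell_aux r w h ‖y‖ (dist y c) hw hwr h0 hhr (norm_nonneg y) dist_nonneg
        (hpyth y hyH)).mpr ⟨by rw [← hri]; exact h1, by rw [← hrs]; exact h2⟩, hyH⟩
  · clear_value rs ri
    calc rs * (rs - ri) ≤ rs ^ 2 - ri ^ 2 := by nlinarith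
      _ ≤ r ^ 2 - ((r - w) ^ 2 - h ^ 2) - h ^ 2 := by nlinarith
      _ ≤ 2 * r * w := by nlinarith
end

section
/- Let Ω = {x ∈ R^d : r−w ≤ |x| ≤ r} with 0 < w ≤ r, let d ≥ 3, and let ω ∈ S^{d−1} and A ∈ R^d be fixed. Then the Lebesgue measure of the set {X ∈ Ω : |ω · (X − A)| ≤ h} is at most C(d) · w r^{d−2} h for a constant C(d) depending only on d. -/
open MeasureTheory Metric

open Finset in
lemma aux_pow_sub_pow {b c : ℝ} (n : ℕ) (hb : 0 ≤ b) (hbc : b ≤ c) :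
    c ^ n - b ^ n ≤ n * c ^ (n - 1) * (c - b) := by
  have hc : 0 ≤ c := hb.trans hbc
  rw [← geom_sum₂_mul c b n]
  have hsum : (∑ i ∈ range n, c ^ i * b ^ (n - 1 - i)) ≤ (n : ℝ) * c ^ (n - 1) := by
    calc (∑ i ∈ range n, c ^ i * b ^ (n - 1 - i)) ≤ ∑ _i ∈ range n, c ^ (n - 1) := by
          apply Finset.sum_le_sum
          intro i hi
          calc c ^ i * b ^ (n - 1 - i) ≤ c ^ i * c ^ (n - 1 - i) :=
                mul_le_mul_of_nonneg_left (pow_le_pow_left₀ hb hbc _) (pow_nonneg hc _)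
            _ = c ^ (i + (n - 1 - i)) := (pow_add c i _).symm
            _ = c ^ (n - 1) := by
                congr 1
                have := Finset.mem_range.mp hi
                omega
      _ = (n : ℝ) * c ^ (n - 1) := by
          rw [Finset.sum_const, Finset.card_range, nsmul_eq_mul]
  exact mul_le_mul_of_nonneg_right hsum (by linarith)

lemma aux_annulus {k : ℕ} (hk : 1 ≤ k) {b c r w : ℝ} (hb : 0 ≤ b) (hbc : b ≤ c)
    (hcr : c ≤ r) (hw : 0 ≤ w) (hsq : c ^ 2 - b ^ 2 ≤ 2 * r * w) :
    c ^ (k + 1) - b ^ (k + 1) ≤ 2 * ((k : ℝ) + 1) * w * r ^ k := by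
  have hc : 0 ≤ c := hb.trans hbc
  have hr : 0 ≤ r := hc.trans hcr
  have h1 : c ^ (k + 1) - b ^ (k + 1) ≤ ((k : ℝ) + 1) * c ^ k * (c - b) := by
    have := aux_pow_sub_pow (k + 1) hb hbc
    push_cast at this
    simpa using this
  have hck : c ^ k * (c - b) = c ^ (k - 1) * (c * (c - b)) := by
    rw [← mul_assoc, ← pow_succ]
    congr 2
    omega
  have hcb : c * (c - b) ≤ c ^ 2 - b ^ 2 := by nlinarith
  have h2 : c ^ k * (c - b) ≤ r ^ (k - 1) * (2 * r * w) := by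
    rw [hck]
    calc c ^ (k - 1) * (c * (c - b)) ≤ c ^ (k - 1) * (2 * r * w) :=
          mul_le_mul_of_nonneg_left (hcb.trans hsq) (pow_nonneg hc _)
      _ ≤ r ^ (k - 1) * (2 * r * w) :=
          mul_le_mul_of_nonneg_right (pow_le_pow_left₀ hc hcr _) (by positivity)
  have hrk : r ^ (k - 1) * r = r ^ k := by
    rw [← pow_succ]
    congr 1
    omega
  calc c ^ (k + 1) - b ^ (k + 1) ≤ ((k : ℝ) + 1) * c ^ k * (c - b) := h1
    _ = ((k : ℝ) + 1) * (c ^ k * (c - b)) := by ring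
    _ ≤ ((k : ℝ) + 1) * (r ^ (k - 1) * (2 * r * w)) :=
        mul_le_mul_of_nonneg_left h2 (by positivity)
    _ = 2 * ((k : ℝ) + 1) * w * (r ^ (k - 1) * r) := by ring
    _ = 2 * ((k : ℝ) + 1) * w * r ^ k := by rw [hrk]

set_option maxHeartbeats 1000000 in
/-- The measure of the intersection of the shell `{r-w ≤ |x| ≤ r}` with a slab of
half-thickness `h` orthogonal to a unit vector `ω` through a point `A` is at most
`C(d) · w r^{d-2} h`. -/
theorem stmt5 (d : ℕ) (hd : 3 ≤ d) :
    ∃ C > (0:ℝ), ∀ (r w h : ℝ) (ω A : EuclideanSpace ℝ (Fin d)),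
      0 < w → w ≤ r → ‖ω‖ = 1 → 0 ≤ h →
      volume {X : EuclideanSpace ℝ (Fin d) |
          (r - w ≤ ‖X‖ ∧ ‖X‖ ≤ r) ∧ |(inner ℝ ω (X - A) : ℝ)| ≤ h}
        ≤ ENNReal.ofReal (C * w * r ^ (d-2) * h) := by
  obtain ⟨k, hk1, rfl⟩ : ∃ k, 1 ≤ k ∧ d = k + 2 := ⟨d - 2, by omega, by omega⟩
  haveI : Nontrivial (EuclideanSpace ℝ (Fin (k+1))) := by
    refine ⟨⟨EuclideanSpace.single 0 1, 0, fun hcon => ?_⟩⟩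
    have := congrArg norm hcon
    simp [EuclideanSpace.norm_single] at this
  set κ : ENNReal := volume (ball (0 : EuclideanSpace ℝ (Fin (k+1))) 1) with hκdef
  have hκfin : κ ≠ ⊤ := measure_ball_lt_top.ne
  have hκpos : 0 < κ := measure_ball_pos _ _ one_pos
  set K : ℝ := κ.toReal with hKdef
  have hKpos : 0 < K := ENNReal.toReal_pos hκpos.ne' hκfin
  have hκK : κ = ENNReal.ofReal K := (ENNReal.ofReal_toReal hκfin).symm
  refine ⟨4 * ((k : ℝ) + 1) * K, by positivity, ?_⟩
  intro r w h ω A hw hwr hω hh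
  have hr : 0 < r := hw.trans_le hwr
  have hrw : 0 ≤ r - w := by linarith
  set a : ℝ := (inner ℝ ω A : ℝ) with ha
  set S' : Set (EuclideanSpace ℝ (Fin (k+2))) :=
    {X | (r - w ≤ ‖X‖ ∧ ‖X‖ ≤ r) ∧ |X 0 - a| ≤ h} with hS'
  -- Step 1: rotate ω to the first basis vector
  have hstep1 : volume {X : EuclideanSpace ℝ (Fin (k+2)) |
      (r - w ≤ ‖X‖ ∧ ‖X‖ ≤ r) ∧ |(inner ℝ ω (X - A) : ℝ)| ≤ h} = volume S' := by
    set e0 : EuclideanSpace ℝ (Fin (k+2)) := EuclideanSpace.single 0 1 with he0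
    have he0n : ‖e0‖ = 1 := by simp [he0, EuclideanSpace.norm_single]
    set R := Submodule.reflection (ℝ ∙ (ω - e0))ᗮ with hR
    have hRω : R ω = e0 := by rw [hR]; exact Submodule.reflection_sub (by rw [hω, he0n])
    have hRR : ∀ Y, R (R Y) = Y := by intro Y; rw [hR]; exact Submodule.reflection_reflection _ Y
    have key : (⇑R) ⁻¹' {X : EuclideanSpace ℝ (Fin (k+2)) |
        (r - w ≤ ‖X‖ ∧ ‖X‖ ≤ r) ∧ |(inner ℝ ω (X - A) : ℝ)| ≤ h} = S' := by
      ext X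
      have hnorm : ‖R X‖ = ‖X‖ := R.norm_map X
      have hinner : (inner ℝ ω (R X) : ℝ) = X 0 := by
        have h1 : (inner ℝ (R ω) (R (R X)) : ℝ) = inner ℝ ω (R X) := R.inner_map_map ω (R X)
        rw [← h1, hRω, hRR]
        simp [he0, EuclideanSpace.inner_single_left]
      simp only [Set.mem_preimage, Set.mem_setOf_eq, hS', hnorm, inner_sub_right, hinner, ha]
    calc volume {X : EuclideanSpace ℝ (Fin (k+2)) |
        (r - w ≤ ‖X‖ ∧ ‖X‖ ≤ r) ∧ |(inner ℝ ω (X - A) : ℝ)| ≤ h}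
        = volume ((⇑R) ⁻¹' {X : EuclideanSpace ℝ (Fin (k+2)) |
            (r - w ≤ ‖X‖ ∧ ‖X‖ ≤ r) ∧ |(inner ℝ ω (X - A) : ℝ)| ≤ h}) :=
          ((R.measurePreserving).measure_preimage_emb
            R.toHomeomorph.measurableEmbedding _).symm
      _ = volume S' := by rw [key]
  -- Step 2: transfer to ℝ × (Fin (k+1) → ℝ)
  set T : Set (ℝ × (Fin (k+1) → ℝ)) :=
    {p | (r - w ≤ Real.sqrt (p.1 ^ 2 + ∑ j, p.2 j ^ 2) ∧
          Real.sqrt (p.1 ^ 2 + ∑ j, p.2 j ^ 2) ≤ r) ∧ |p.1 - a| ≤ h} with hT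
  have hstep2 : volume S' = volume T := by
    have mp1 := EuclideanSpace.volume_preserving_symm_measurableEquiv_toLp (Fin (k+2))
    have mp2 := volume_preserving_piFinSuccAbove (fun _ : Fin (k+2) => ℝ) 0
    have hmp : MeasurePreserving
        ((MeasurableEquiv.piFinSuccAbove (fun _ : Fin (k+2) => ℝ) 0) ∘
          ((MeasurableEquiv.toLp 2 (Fin (k+2) → ℝ)).symm)) volume volume := mp2.comp mp1
    have hemb : MeasurableEmbedding
        ((MeasurableEquiv.piFinSuccAbove (fun _ : Fin (k+2) => ℝ) 0) ∘
          ((MeasurableEquiv.toLp 2 (Fin (k+2) → ℝ)).symm)) :=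
      (MeasurableEquiv.piFinSuccAbove (fun _ : Fin (k+2) => ℝ) 0).measurableEmbedding.comp
        ((MeasurableEquiv.toLp 2 (Fin (k+2) → ℝ)).symm).measurableEmbedding
    have hpre : ((MeasurableEquiv.piFinSuccAbove (fun _ : Fin (k+2) => ℝ) 0) ∘
          ((MeasurableEquiv.toLp 2 (Fin (k+2) → ℝ)).symm)) ⁻¹' T = S' := by
      ext X
      have hnx : ‖X‖ = Real.sqrt ((X 0) ^ 2 + ∑ j, (X (Fin.succAbove 0 j)) ^ 2) := by
        rw [EuclideanSpace.norm_eq]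
        congr 1
        rw [Fin.sum_univ_succAbove (fun i => ‖X i‖ ^ 2) 0]
        simp [Real.norm_eq_abs, sq_abs]
      simp only [Set.mem_preimage, Function.comp_apply, hT, Set.mem_setOf_eq, hS',
        MeasurableEquiv.piFinSuccAbove_apply, hnx]
      rfl
    rw [← hpre, hmp.measure_preimage_emb hemb]
  -- measurability of T
  have hcont : Continuous fun p : ℝ × (Fin (k+1) → ℝ) =>
      Real.sqrt (p.1 ^ 2 + ∑ j, p.2 j ^ 2) := by
    apply Real.continuous_sqrt.comp
    exact (continuous_fst.pow 2).add
      (continuous_finset_sum _ fun j _ => ((continuous_apply j).comp continuous_snd).pow 2)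
  have hTmeas : MeasurableSet T := by
    have h1 : MeasurableSet {p : ℝ × (Fin (k+1) → ℝ) |
        r - w ≤ Real.sqrt (p.1 ^ 2 + ∑ j, p.2 j ^ 2)} :=
      measurableSet_le measurable_const hcont.measurable
    have h2 : MeasurableSet {p : ℝ × (Fin (k+1) → ℝ) |
        Real.sqrt (p.1 ^ 2 + ∑ j, p.2 j ^ 2) ≤ r} :=
      measurableSet_le hcont.measurable measurable_const
    have h3 : MeasurableSet {p : ℝ × (Fin (k+1) → ℝ) | |p.1 - a| ≤ h} :=
      measurableSet_le ((continuous_fst.sub continuous_const).abs.measurable) measurable_const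
    exact (h1.inter h2).inter h3
  -- slice bound
  set M : ENNReal := ENNReal.ofReal (2 * ((k : ℝ) + 1) * w * r ^ k) * κ with hM
  have hslice : ∀ t : ℝ, volume {g : Fin (k+1) → ℝ | (t, g) ∈ T} ≤
      Set.indicator (Set.Icc (a - h) (a + h)) (fun _ => M) t := by
    intro t
    by_cases ht : |t - a| ≤ h
    · obtain ⟨ht1, ht2⟩ := abs_le.mp ht
      rw [Set.indicator_of_mem (by constructor <;> linarith : t ∈ Set.Icc (a - h) (a + h))]
      set c : ℝ := Real.sqrt (max (r ^ 2 - t ^ 2) 0) with hc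
      set b : ℝ := Real.sqrt (max ((r - w) ^ 2 - t ^ 2) 0) with hb
      have hb0 : 0 ≤ b := Real.sqrt_nonneg _
      have hc0 : 0 ≤ c := Real.sqrt_nonneg _
      have hbc : b ≤ c := Real.sqrt_le_sqrt (max_le_max (by nlinarith) le_rfl)
      have hc2 : c ^ 2 = max (r ^ 2 - t ^ 2) 0 := Real.sq_sqrt (le_max_right _ _)
      have hb2 : b ^ 2 = max ((r - w) ^ 2 - t ^ 2) 0 := Real.sq_sqrt (le_max_right _ _)
      have hcr : c ≤ r := by
        have h1 : max (r ^ 2 - t ^ 2) 0 ≤ r ^ 2 := max_le (by nlinarith) (by positivity)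
        calc c ≤ Real.sqrt (r ^ 2) := Real.sqrt_le_sqrt h1
          _ = r := Real.sqrt_sq hr.le
      have hsq : c ^ 2 - b ^ 2 ≤ 2 * r * w := by
        rw [hc2, hb2]
        rcases max_cases (r ^ 2 - t ^ 2) 0 with ⟨e1, _⟩ | ⟨e1, _⟩ <;>
          rcases max_cases ((r - w) ^ 2 - t ^ 2) 0 with ⟨e2, he2⟩ | ⟨e2, he2⟩ <;>
          rw [e1, e2] <;> nlinarith
      have hsub : {g : Fin (k+1) → ℝ | (t, g) ∈ T} ⊆
          {g : Fin (k+1) → ℝ | b ^ 2 ≤ ∑ j, g j ^ 2 ∧ ∑ j, g j ^ 2 ≤ c ^ 2} := by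
        intro g hg
        obtain ⟨⟨hg1, hg2⟩, -⟩ := hg
        have hq0 : (0:ℝ) ≤ t ^ 2 + ∑ j, g j ^ 2 := by positivity
        have h2' : t ^ 2 + ∑ j, g j ^ 2 ≤ r ^ 2 := by
          calc t ^ 2 + ∑ j, g j ^ 2 = Real.sqrt (t ^ 2 + ∑ j, g j ^ 2) ^ 2 :=
                (Real.sq_sqrt hq0).symm
            _ ≤ r ^ 2 := pow_le_pow_left₀ (Real.sqrt_nonneg _) hg2 2
        have h1' : (r - w) ^ 2 ≤ t ^ 2 + ∑ j, g j ^ 2 := by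
          calc (r - w) ^ 2 ≤ Real.sqrt (t ^ 2 + ∑ j, g j ^ 2) ^ 2 := pow_le_pow_left₀ hrw hg1 2
            _ = t ^ 2 + ∑ j, g j ^ 2 := Real.sq_sqrt hq0
        constructor
        · rw [hb2]
          exact max_le (by linarith) (by positivity)
        · rw [hc2]
          exact le_trans (by linarith) (le_max_left _ _)
      have htrans : volume {g : Fin (k+1) → ℝ | b ^ 2 ≤ ∑ j, g j ^ 2 ∧ ∑ j, g j ^ 2 ≤ c ^ 2}
          = volume {x : EuclideanSpace ℝ (Fin (k+1)) |
              b ^ 2 ≤ ∑ j, x j ^ 2 ∧ ∑ j, x j ^ 2 ≤ c ^ 2} := by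
        rw [← (EuclideanSpace.volume_preserving_symm_measurableEquiv_toLp
          (Fin (k+1))).measure_preimage_emb
          ((MeasurableEquiv.toLp 2 (Fin (k+1) → ℝ)).symm).measurableEmbedding]
        rfl
      have hsub2 : {x : EuclideanSpace ℝ (Fin (k+1)) |
            b ^ 2 ≤ ∑ j, x j ^ 2 ∧ ∑ j, x j ^ 2 ≤ c ^ 2}
          ⊆ closedBall 0 c \ ball 0 b := by
        rintro x ⟨hx1, hx2⟩
        have hxn : ‖x‖ ^ 2 = ∑ j, x j ^ 2 := by
          rw [EuclideanSpace.norm_eq, Real.sq_sqrt (by positivity)]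
          simp [Real.norm_eq_abs, sq_abs]
        constructor
        · rw [mem_closedBall_zero_iff]
          have hle : ‖x‖ ^ 2 ≤ c ^ 2 := by rw [hxn]; exact hx2
          nlinarith [norm_nonneg x]
        · rw [mem_ball_zero_iff]
          push_neg
          have hle : b ^ 2 ≤ ‖x‖ ^ 2 := by rw [hxn]; exact hx1
          nlinarith [norm_nonneg x]
      have hcb_vol : volume (closedBall (0 : EuclideanSpace ℝ (Fin (k+1))) c)
          = ENNReal.ofReal (c ^ (k+1)) * κ := by
        rw [Measure.addHaar_closedBall _ _ hc0, finrank_euclideanSpace_fin, ← hκdef]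
      have hb_vol : volume (ball (0 : EuclideanSpace ℝ (Fin (k+1))) b)
          = ENNReal.ofReal (b ^ (k+1)) * κ := by
        rw [Measure.addHaar_ball _ _ hb0, finrank_euclideanSpace_fin, ← hκdef]
      have hann : volume (closedBall (0 : EuclideanSpace ℝ (Fin (k+1))) c \ ball 0 b) ≤ M := by
        rw [measure_diff (ball_subset_closedBall.trans (closedBall_subset_closedBall hbc))
          measurableSet_ball.nullMeasurableSet measure_ball_lt_top.ne, hcb_vol, hb_vol, hM]
        rw [tsub_le_iff_right, ← add_mul, ← ENNReal.ofReal_add (by positivity) (by positivity)]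
        refine mul_le_mul_left (ENNReal.ofReal_le_ofReal ?_) _
        have := aux_annulus hk1 hb0 hbc hcr hw.le hsq
        linarith
      calc volume {g : Fin (k+1) → ℝ | (t, g) ∈ T}
          ≤ volume {g : Fin (k+1) → ℝ | b ^ 2 ≤ ∑ j, g j ^ 2 ∧ ∑ j, g j ^ 2 ≤ c ^ 2} :=
            measure_mono hsub
        _ = volume {x : EuclideanSpace ℝ (Fin (k+1)) |
              b ^ 2 ≤ ∑ j, x j ^ 2 ∧ ∑ j, x j ^ 2 ≤ c ^ 2} := htrans
        _ ≤ volume (closedBall (0 : EuclideanSpace ℝ (Fin (k+1))) c \ ball 0 b) :=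
            measure_mono hsub2
        _ ≤ M := hann
    · have hempty : {g : Fin (k+1) → ℝ | (t, g) ∈ T} = ∅ := by
        ext g
        simp only [hT, Set.mem_setOf_eq, Set.mem_empty_iff_false, iff_false, not_and]
        intro _
        exact fun h3 => ht h3
      rw [hempty, measure_empty]
      exact zero_le
  calc volume {X : EuclideanSpace ℝ (Fin (k+2)) |
      (r - w ≤ ‖X‖ ∧ ‖X‖ ≤ r) ∧ |(inner ℝ ω (X - A) : ℝ)| ≤ h}
      = volume T := by rw [hstep1, hstep2]
    _ = ∫⁻ t, volume (Prod.mk t ⁻¹' T) ∂(volume : Measure ℝ) := by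
        rw [Measure.volume_eq_prod, Measure.prod_apply hTmeas]
    _ ≤ ∫⁻ t, Set.indicator (Set.Icc (a - h) (a + h)) (fun _ => M) t ∂(volume : Measure ℝ) :=
        lintegral_mono fun t => hslice t
    _ = M * volume (Set.Icc (a - h) (a + h)) := lintegral_indicator_const measurableSet_Icc M
    _ = ENNReal.ofReal (2 * ((k : ℝ) + 1) * w * r ^ k) * κ * ENNReal.ofReal (2 * h) := by
        rw [hM, Real.volume_Icc, show a + h - (a - h) = 2 * h by ring]
    _ ≤ ENNReal.ofReal (4 * ((k : ℝ) + 1) * K * w * r ^ (k + 2 - 2) * h) := by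
        rw [hκK, ← ENNReal.ofReal_mul (by positivity), ← ENNReal.ofReal_mul (by positivity)]
        apply ENNReal.ofReal_le_ofReal
        rw [show k + 2 - 2 = k from by omega]
        nlinarith [pow_nonneg hr.le k, hKpos.le, hw.le, hh]
end
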